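/- Let K be a field complete with respect to a nonarchimedean absolute value, with valuation ring K° = {λ ∈ K : |λ| ≤ 1}. Let (U, ‖·‖) be a finite-dimensional seminormed K-vector space and let N be a finitely generated K°-submodule of U° = {x ∈ U : ‖x‖ ≤ 1} that spans U over K. Define ‖0‖_N = 0 and, for x ∈ U \ {0}, ‖x‖_N = inf{ |λ|⁻¹ : λ ∈ K^×, λ·x ∈ N }. Then: (1) ‖·‖_N is a norm on U; (2) for every K°-basis (e_1, …, e_d) of N and all λ_1, …, λ_d ∈ K one has ‖Σᵢ λᵢ eᵢ‖_N = maxᵢ |λᵢ| and ‖Σᵢ λᵢ eᵢ‖ ≤ maxᵢ |λᵢ|; in particular ‖x‖ ≤ ‖x‖_N for every x ∈ U. -/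

import Mathlib

noncomputable section

open Classical in
/-- The gauge (semi)norm attached to a subset `N` (a `K°`-lattice) of a `K`-vector space `U`:
`‖x‖_N = inf { ‖λ‖⁻¹ | λ ∈ K^×, λ • x ∈ N }`, with `‖0‖_N = 0`. -/
def gaugeNorm (K : Type*) {U : Type*} [NormedField K] [AddCommGroup U] [Module K U]
    (N : Set U) (x : U) : ℝ :=
  if x = 0 then 0
  else sInf {r : ℝ | ∃ lam : K, lam ≠ 0 ∧ lam • x ∈ N ∧ r = ‖lam‖⁻¹}

/-- The defining set of the gauge norm. -/
def gaugeSet (K : Type*) {U : Type*} [NormedField K] [AddCommGroup U] [Module K U]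
    (N : Set U) (x : U) : Set ℝ :=
  {r : ℝ | ∃ lam : K, lam ≠ 0 ∧ lam • x ∈ N ∧ r = ‖lam‖⁻¹}

open Classical in
lemma gaugeNorm_of_ne {K : Type*} {U : Type*} [NormedField K] [AddCommGroup U] [Module K U]
    (N : Set U) {x : U} (hx : x ≠ 0) : gaugeNorm K N x = sInf (gaugeSet K N x) := if_neg hx

lemma gaugeNorm_zero {K : Type*} {U : Type*} [NormedField K] [AddCommGroup U] [Module K U]
    (N : Set U) : gaugeNorm K N (0 : U) = 0 := if_pos rfl

lemma aux_sum_mem {U : Type*} [AddCommMonoid U] {N : Set U}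
    (hN0 : (0 : U) ∈ N) (hNadd : ∀ x ∈ N, ∀ y ∈ N, x + y ∈ N)
    {ι : Type*} (s : Finset ι) (f : ι → U) (h : ∀ i ∈ s, f i ∈ N) :
    (∑ i ∈ s, f i) ∈ N :=
  Finset.sum_induction f (· ∈ N) (fun a b ha hb => hNadd a ha b hb) hN0 h

lemma aux_p_sum {U : Type*} [AddCommMonoid U] {p : U → ℝ}
    (hp00 : p 0 = 0) (hpmax : ∀ x y, p (x + y) ≤ max (p x) (p y))
    {ι : Type*} (s : Finset ι) (f : ι → U) (C : ℝ) (hC : 0 ≤ C)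
    (h : ∀ i ∈ s, p (f i) ≤ C) : p (∑ i ∈ s, f i) ≤ C := by
  classical
  induction s using Finset.cons_induction with
  | empty => simpa [hp00] using hC
  | cons a s ha ih =>
    rw [Finset.sum_cons]
    exact le_trans (hpmax _ _) (max_le (h a (Finset.mem_cons_self a s))
      (ih fun i hi => h i (Finset.mem_cons_of_mem hi)))

/-- **Gauge norm of a lattice** (Lemma `lem:gaugenorm`).
Let `K` be a complete nonarchimedean valued field, `(U, p)` a finite-dimensional seminormed
`K`-vector space, and `N` a finitely generated `K°`-submodule of the unit ball
`U° = {x | p x ≤ 1}` spanning `U` over `K`.  Then the gauge `‖·‖_N` is a norm on `U`; moreover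
for every `K°`-basis `(e 1, …, e d)` of `N` and all scalars `λ i ∈ K` one has
`‖∑ λ i • e i‖_N = max ‖λ i‖ ≥ p (∑ λ i • e i)`; in particular `p x ≤ ‖x‖_N` for all `x`. -/
theorem gaugeNorm_is_norm_and_basis_formula
    {K : Type*} [NormedField K] [IsUltrametricDist K] [CompleteSpace K]
    {U : Type*} [AddCommGroup U] [Module K U] [FiniteDimensional K U]
    (p : U → ℝ)
    (hp0 : ∀ x, 0 ≤ p x)
    (hpsmul : ∀ (a : K) (x : U), p (a • x) = ‖a‖ * p x)
    (hpmax : ∀ x y, p (x + y) ≤ max (p x) (p y))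
    (N : Set U)
    -- `N` is a `K°`-submodule of `U`:
    (hN0 : (0 : U) ∈ N)
    (hNadd : ∀ x ∈ N, ∀ y ∈ N, x + y ∈ N)
    (hNsmul : ∀ lam : K, ‖lam‖ ≤ 1 → ∀ x ∈ N, lam • x ∈ N)
    -- `N` is contained in the unit ball `U°` of the seminorm `p`:
    (hNunit : ∀ x ∈ N, p x ≤ 1)
    -- `N` is finitely generated over `K° = {λ : K | ‖λ‖ ≤ 1}`:
    (hNfg : ∃ s : Finset U, ↑s ⊆ N ∧ ∀ x ∈ N, ∃ c : U → K,
      (∀ y ∈ s, ‖c y‖ ≤ 1) ∧ x = ∑ y ∈ s, c y • y)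
    -- `N` spans `U` over `K`:
    (hNspan : Submodule.span K N = ⊤) :
    -- (1) `‖·‖_N` is a norm on `U`:
    ((∀ x, 0 ≤ gaugeNorm K N x) ∧
      (∀ (a : K) (x : U), gaugeNorm K N (a • x) = ‖a‖ * gaugeNorm K N x) ∧
      (∀ x y, gaugeNorm K N (x + y) ≤ max (gaugeNorm K N x) (gaugeNorm K N y)) ∧
      (∀ x, gaugeNorm K N x = 0 → x = 0)) ∧
    -- (2) for every `K°`-basis `e : Fin d → U` of `N` and all scalars `lam : Fin d → K`:
    (∀ (d : ℕ) (e : Fin d → U), (∀ i, e i ∈ N) →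
      (∀ x ∈ N, ∃! c : Fin d → K, (∀ i, ‖c i‖ ≤ 1) ∧ x = ∑ i, c i • e i) →
      ∀ lam : Fin d → K,
        gaugeNorm K N (∑ i, lam i • e i) = (⨆ i, ‖lam i‖) ∧
        p (∑ i, lam i • e i) ≤ ⨆ i, ‖lam i‖) ∧
    -- in particular `p ≤ ‖·‖_N`:
    (∀ x, p x ≤ gaugeNorm K N x) := by
  classical
  have hp00 : p 0 = 0 := by simpa using hpsmul 0 0
  have hSnonneg : ∀ x : U, ∀ r ∈ gaugeSet K N x, (0:ℝ) ≤ r := by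
    rintro x r ⟨lam, _, _, rfl⟩; positivity
  have hbdd : ∀ x : U, BddBelow (gaugeSet K N x) := fun x => ⟨0, fun r hr => hSnonneg x r hr⟩
  obtain ⟨t, htN, htrep⟩ := hNfg
  have hNsub : N ⊆ (Submodule.span K (↑t : Set U) : Set U) := by
    intro x hx
    obtain ⟨c, _, rfl⟩ := htrep x hx
    exact Submodule.sum_mem _ fun y hy => Submodule.smul_mem _ _ (Submodule.subset_span hy)
  have htspan : Submodule.span K (↑t : Set U) = ⊤ :=
    eq_top_iff.mpr (hNspan ▸ Submodule.span_le.mpr hNsub)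
  -- nonemptiness of the gauge set
  have hSne : ∀ x : U, (gaugeSet K N x).Nonempty := by
    intro x
    have hx : x ∈ Submodule.span K (↑t : Set U) := by rw [htspan]; trivial
    obtain ⟨f, -, hf⟩ := Submodule.mem_span_finset.mp hx
    by_cases hb : ∀ y ∈ t, ‖f y‖ ≤ 1
    · refine ⟨1, 1, one_ne_zero, ?_, by simp⟩
      rw [one_smul, ← hf]
      refine aux_sum_mem hN0 hNadd t (fun y => f y • y) ?_
      intro y hy
      exact hNsmul _ (hb y hy) _ (htN hy)
    · push_neg at hb
      obtain ⟨y1, hy1t, hy1⟩ := hb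
      obtain ⟨y0, hy0t, hy0⟩ := t.exists_max_image (fun y => ‖f y‖) ⟨y1, hy1t⟩
      have hy0pos : (0:ℝ) < ‖f y0‖ := lt_trans one_pos (lt_of_lt_of_le hy1 (hy0 y1 hy1t))
      have hfy0 : f y0 ≠ 0 := by
        intro h; rw [h, norm_zero] at hy0pos; exact lt_irrefl _ hy0pos
      refine ⟨‖(f y0)⁻¹‖⁻¹, (f y0)⁻¹, inv_ne_zero hfy0, ?_, rfl⟩
      have : (f y0)⁻¹ • x = ∑ y ∈ t, ((f y0)⁻¹ * f y) • y := by
        rw [← hf, Finset.smul_sum]; simp [smul_smul]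
      rw [this]
      refine aux_sum_mem hN0 hNadd t (fun y => ((f y0)⁻¹ * f y) • y) ?_
      intro y hy
      refine hNsmul _ ?_ _ (htN hy)
      rw [norm_mul, norm_inv]
      calc ‖f y0‖⁻¹ * ‖f y‖ ≤ ‖f y0‖⁻¹ * ‖f y0‖ :=
            mul_le_mul_of_nonneg_left (hy0 y hy) (inv_nonneg.mpr (norm_nonneg _))
        _ = 1 := inv_mul_cancel₀ (ne_of_gt hy0pos)
  -- basic bounds
  have hUB : ∀ (x : U) (lam : K), lam ≠ 0 → lam • x ∈ N →
      gaugeNorm K N x ≤ ‖lam‖⁻¹ := by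
    intro x lam hl hm
    by_cases hx : x = 0
    · rw [hx, gaugeNorm_zero]; positivity
    · rw [gaugeNorm_of_ne N hx]; exact csInf_le (hbdd x) ⟨lam, hl, hm, rfl⟩
  have hLB : ∀ (x : U) (C : ℝ), x ≠ 0 →
      (∀ lam : K, lam ≠ 0 → lam • x ∈ N → C ≤ ‖lam‖⁻¹) → C ≤ gaugeNorm K N x := by
    intro x C hx h
    rw [gaugeNorm_of_ne N hx]
    exact le_csInf (hSne x) (by rintro r ⟨lam, h1, h2, rfl⟩; exact h lam h1 h2)
  have hgnn : ∀ x : U, 0 ≤ gaugeNorm K N x := by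
    intro x
    by_cases hx : x = 0
    · rw [hx, gaugeNorm_zero]
    · rw [gaugeNorm_of_ne N hx]; exact Real.sInf_nonneg (hSnonneg x)
  -- homogeneity
  have hsmul_le : ∀ (a : K) (x : U), a ≠ 0 →
      gaugeNorm K N (a • x) ≤ ‖a‖ * gaugeNorm K N x := by
    intro a x ha
    by_cases hx : x = 0
    · simp [hx, gaugeNorm_zero]
    · have hax : a • x ≠ 0 := smul_ne_zero ha hx
      have hanorm : (0:ℝ) < ‖a‖ := norm_pos_iff.mpr ha
      have key : gaugeNorm K N (a • x) * ‖a‖⁻¹ ≤ gaugeNorm K N x := by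
        apply hLB x _ hx
        intro mu hmu hmem
        have h1 : (mu * a⁻¹) • (a • x) = mu • x := by
          rw [smul_smul, mul_assoc, inv_mul_cancel₀ ha, mul_one]
        have h2 : gaugeNorm K N (a • x) ≤ ‖mu * a⁻¹‖⁻¹ :=
          hUB _ _ (mul_ne_zero hmu (inv_ne_zero ha)) (h1 ▸ hmem)
        have h3 : ‖mu * a⁻¹‖⁻¹ = ‖mu‖⁻¹ * ‖a‖ := by
          rw [norm_mul, norm_inv, mul_inv, inv_inv]
        rw [h3] at h2
        calc gaugeNorm K N (a • x) * ‖a‖⁻¹ ≤ (‖mu‖⁻¹ * ‖a‖) * ‖a‖⁻¹ :=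
              mul_le_mul_of_nonneg_right h2 (inv_nonneg.mpr (le_of_lt hanorm))
          _ = ‖mu‖⁻¹ * (‖a‖ * ‖a‖⁻¹) := by ring
          _ = ‖mu‖⁻¹ := by rw [mul_inv_cancel₀ (ne_of_gt hanorm), mul_one]
      calc gaugeNorm K N (a • x) = (gaugeNorm K N (a • x) * ‖a‖⁻¹) * ‖a‖ := by
              rw [mul_assoc, inv_mul_cancel₀ (ne_of_gt hanorm), mul_one]
        _ ≤ gaugeNorm K N x * ‖a‖ := mul_le_mul_of_nonneg_right key (le_of_lt hanorm)
        _ = ‖a‖ * gaugeNorm K N x := mul_comm _ _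
  have hsmul : ∀ (a : K) (x : U), gaugeNorm K N (a • x) = ‖a‖ * gaugeNorm K N x := by
    intro a x
    by_cases ha : a = 0
    · rw [ha, zero_smul, gaugeNorm_zero, norm_zero, zero_mul]
    · refine le_antisymm (hsmul_le a x ha) ?_
      have h := hsmul_le a⁻¹ (a • x) (inv_ne_zero ha)
      rw [smul_smul, inv_mul_cancel₀ ha, one_smul, norm_inv] at h
      have hanorm : (0:ℝ) < ‖a‖ := norm_pos_iff.mpr ha
      calc ‖a‖ * gaugeNorm K N x ≤ ‖a‖ * (‖a‖⁻¹ * gaugeNorm K N (a • x)) :=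
            mul_le_mul_of_nonneg_left h (le_of_lt hanorm)
        _ = ‖a‖ * ‖a‖⁻¹ * gaugeNorm K N (a • x) := by ring
        _ = gaugeNorm K N (a • x) := by rw [mul_inv_cancel₀ (ne_of_gt hanorm), one_mul]
  -- scaling inside N
  have hsc : ∀ (l m : K) (z : U), m ≠ 0 → ‖l‖ ≤ ‖m‖ → m • z ∈ N → l • z ∈ N := by
    intro l m z hm hle hmem
    have h1 : l • z = (l * m⁻¹) • (m • z) := by
      rw [smul_smul, mul_assoc, inv_mul_cancel₀ hm, mul_one]
    rw [h1]
    apply hNsmul _ _ _ hmem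
    rw [norm_mul, norm_inv]
    have hmpos : (0:ℝ) < ‖m‖ := norm_pos_iff.mpr hm
    calc ‖l‖ * ‖m‖⁻¹ ≤ ‖m‖ * ‖m‖⁻¹ :=
          mul_le_mul_of_nonneg_right hle (inv_nonneg.mpr (le_of_lt hmpos))
      _ = 1 := mul_inv_cancel₀ (ne_of_gt hmpos)
  -- ultrametric triangle inequality
  have htri : ∀ x y : U, gaugeNorm K N (x + y) ≤ max (gaugeNorm K N x) (gaugeNorm K N y) := by
    intro x y
    by_cases hx : x = 0
    · rw [hx, zero_add]; exact le_max_right _ _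
    by_cases hy : y = 0
    · rw [hy, add_zero]; exact le_max_left _ _
    by_cases hxy : x + y = 0
    · rw [hxy, gaugeNorm_zero]; exact le_max_of_le_left (hgnn x)
    have main : ∀ (l m : K), l ≠ 0 → m ≠ 0 → l • x ∈ N → m • y ∈ N →
        gaugeNorm K N (x + y) ≤ max ‖l‖⁻¹ ‖m‖⁻¹ := by
      intro l m hl hm hlm hmm
      rcases le_total ‖l‖ ‖m‖ with h | h
      · have hmem : l • (x + y) ∈ N := by
          rw [smul_add]; exact hNadd _ hlm _ (hsc l m y hm h hmm)
        exact le_trans (hUB _ _ hl hmem) (le_max_left _ _)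
      · have hmem : m • (x + y) ∈ N := by
          rw [smul_add]; exact hNadd _ (hsc m l x hl h hlm) _ hmm
        exact le_trans (hUB _ _ hm hmem) (le_max_right _ _)
    by_contra hcon
    push_neg at hcon
    have h1 : sInf (gaugeSet K N x) < gaugeNorm K N (x + y) := by
      rw [← gaugeNorm_of_ne N hx]; exact lt_of_le_of_lt (le_max_left _ _) hcon
    have h2 : sInf (gaugeSet K N y) < gaugeNorm K N (x + y) := by
      rw [← gaugeNorm_of_ne N hy]; exact lt_of_le_of_lt (le_max_right _ _) hcon
    obtain ⟨rx, ⟨lx, hlx0, hlxm, rfl⟩, hrx⟩ := exists_lt_of_csInf_lt (hSne x) h1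
    obtain ⟨ry, ⟨ly, hly0, hlym, rfl⟩, hry⟩ := exists_lt_of_csInf_lt (hSne y) h2
    have := main lx ly hlx0 hly0 hlxm hlym
    have hlt : max ‖lx‖⁻¹ ‖ly‖⁻¹ < gaugeNorm K N (x + y) := max_lt hrx hry
    exact absurd (lt_of_le_of_lt this hlt) (lt_irrefl _)
  -- definiteness
  have hdef : ∀ x : U, gaugeNorm K N x = 0 → x = 0 := by
    intro x hx0
    by_contra hx
    obtain ⟨b0, hb0N, hb0span, hb0li⟩ := exists_linearIndependent K N
    have hb0top : ⊤ ≤ Submodule.span K (Set.range ((↑) : b0 → U)) := by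
      rw [Subtype.range_coe, hb0span, hNspan]
    let b : Module.Basis b0 K U := Module.Basis.mk hb0li hb0top
    have hex : ∃ i, b.repr x i ≠ 0 := by
      by_contra hall
      push_neg at hall
      apply hx
      have hrep0 : b.repr x = 0 := Finsupp.ext hall
      have := congrArg b.repr.symm hrep0
      simpa using this
    obtain ⟨i, hi⟩ := hex
    have hxi : (0:ℝ) < ‖b.repr x i‖ := norm_pos_iff.mpr hi
    have hC0 : (0:ℝ) ≤ ∑ y ∈ t, ‖b.repr y i‖ :=
      Finset.sum_nonneg fun y _ => norm_nonneg _
    set C : ℝ := ∑ y ∈ t, ‖b.repr y i‖ with hC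
    have hlow : ‖b.repr x i‖ / (C + 1) ≤ gaugeNorm K N x := by
      apply hLB x _ hx
      intro lam hlam hmem
      obtain ⟨c, hcb, hceq⟩ := htrep _ hmem
      have he : lam * b.repr x i = ∑ y ∈ t, c y * b.repr y i := by
        have h0 := congrArg (fun z => b.repr z i) hceq
        simpa [map_sum, map_smul, Finsupp.smul_apply, Finset.sum_apply', smul_eq_mul] using h0
      have hnorm : ‖lam‖ * ‖b.repr x i‖ ≤ C := by
        calc ‖lam‖ * ‖b.repr x i‖ = ‖lam * b.repr x i‖ := (norm_mul _ _).symm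
          _ = ‖∑ y ∈ t, c y * b.repr y i‖ := by rw [he]
          _ ≤ ∑ y ∈ t, ‖c y * b.repr y i‖ := norm_sum_le _ _
          _ ≤ ∑ y ∈ t, ‖b.repr y i‖ := Finset.sum_le_sum fun y hy => by
                rw [norm_mul]
                exact mul_le_of_le_one_left (norm_nonneg _) (hcb y hy)
      have hlamp : (0:ℝ) < ‖lam‖ := norm_pos_iff.mpr hlam
      rw [div_le_iff₀ (by linarith : (0:ℝ) < C + 1)]
      have h2 : ‖b.repr x i‖ ≤ ‖lam‖⁻¹ * C := by
        rw [inv_mul_eq_div, le_div_iff₀ hlamp]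
        calc ‖b.repr x i‖ * ‖lam‖ = ‖lam‖ * ‖b.repr x i‖ := mul_comm _ _
          _ ≤ C := hnorm
      calc ‖b.repr x i‖ ≤ ‖lam‖⁻¹ * C := h2
        _ ≤ ‖lam‖⁻¹ * (C + 1) := by
            exact mul_le_mul_of_nonneg_left (by linarith) (inv_nonneg.mpr (le_of_lt hlamp))
    rw [hx0] at hlow
    have hpos : (0:ℝ) < ‖b.repr x i‖ / (C + 1) := div_pos hxi (by linarith)
    linarith
  -- p ≤ gauge
  have hple : ∀ x : U, p x ≤ gaugeNorm K N x := by
    intro x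
    by_cases hx : x = 0
    · rw [hx, gaugeNorm_zero, hp00]
    · apply hLB x _ hx
      intro lam hlam hmem
      have h1 : ‖lam‖ * p x ≤ 1 := by rw [← hpsmul]; exact hNunit _ hmem
      have hlamp : (0:ℝ) < ‖lam‖ := norm_pos_iff.mpr hlam
      rw [show ‖lam‖⁻¹ = 1 / ‖lam‖ from (one_div _).symm, le_div_iff₀ hlamp]
      calc p x * ‖lam‖ = ‖lam‖ * p x := mul_comm _ _
        _ ≤ 1 := h1
  -- part 2
  have part2 : ∀ (d : ℕ) (e : Fin d → U), (∀ i, e i ∈ N) →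
      (∀ x ∈ N, ∃! c : Fin d → K, (∀ i, ‖c i‖ ≤ 1) ∧ x = ∑ i, c i • e i) →
      ∀ lam : Fin d → K,
        gaugeNorm K N (∑ i, lam i • e i) = (⨆ i, ‖lam i‖) ∧
        p (∑ i, lam i • e i) ≤ ⨆ i, ‖lam i‖ := by
    intro d e heN huniq lam
    have hM0 : (0:ℝ) ≤ ⨆ i, ‖lam i‖ := Real.iSup_nonneg fun i => norm_nonneg _
    have hble : ∀ i, ‖lam i‖ ≤ ⨆ i, ‖lam i‖ := fun i =>
      le_ciSup (f := fun i => ‖lam i‖) (Set.finite_range _).bddAbove i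
    have hpb : p (∑ i, lam i • e i) ≤ ⨆ i, ‖lam i‖ := by
      refine aux_p_sum hp00 hpmax Finset.univ (fun i => lam i • e i) _ hM0 ?_
      intro i _
      calc p (lam i • e i) = ‖lam i‖ * p (e i) := hpsmul _ _
        _ ≤ ‖lam i‖ * 1 := mul_le_mul_of_nonneg_left (hNunit _ (heN i)) (norm_nonneg _)
        _ = ‖lam i‖ := mul_one _
        _ ≤ ⨆ i, ‖lam i‖ := hble i
    refine ⟨?_, hpb⟩
    by_cases hall : ∀ i, lam i = 0
    · have hsum0 : (∑ i, lam i • e i) = 0 := by simp [hall]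
      have hM0' : (⨆ i, ‖lam i‖) = 0 :=
        le_antisymm (Real.iSup_le (fun i => by simp [hall i]) le_rfl) hM0
      rw [hsum0, gaugeNorm_zero, hM0']
    · push_neg at hall
      obtain ⟨j, hj⟩ := hall
      have hne : Nonempty (Fin d) := ⟨j⟩
      obtain ⟨i0, hi0⟩ := Finite.exists_max (fun i => ‖lam i‖)
      have hMi0 : (⨆ i, ‖lam i‖) = ‖lam i0‖ :=
        le_antisymm (Real.iSup_le hi0 (norm_nonneg _)) (hble i0)
      have hMpos : (0:ℝ) < ⨆ i, ‖lam i‖ := lt_of_lt_of_le (norm_pos_iff.mpr hj) (hble j)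
      have hli0 : lam i0 ≠ 0 := by
        rw [← norm_pos_iff, ← hMi0]; exact hMpos
      have hi0pos : (0:ℝ) < ‖lam i0‖ := by rw [← hMi0]; exact hMpos
      have hbound : ∀ i, ‖(lam i0)⁻¹ * lam i‖ ≤ 1 := by
        intro i
        rw [norm_mul, norm_inv]
        calc ‖lam i0‖⁻¹ * ‖lam i‖ ≤ ‖lam i0‖⁻¹ * ‖lam i0‖ :=
              mul_le_mul_of_nonneg_left (hi0 i) (inv_nonneg.mpr (le_of_lt hi0pos))
          _ = 1 := inv_mul_cancel₀ (ne_of_gt hi0pos)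
      have hrescale : (lam i0)⁻¹ • (∑ i, lam i • e i) = ∑ i, ((lam i0)⁻¹ * lam i) • e i := by
        rw [Finset.smul_sum]; simp [smul_smul]
      -- x ≠ 0
      have hxne : (∑ i, lam i • e i) ≠ 0 := by
        intro h0
        obtain ⟨c, _, hcu⟩ := huniq 0 hN0
        have h1 : (fun i => (lam i0)⁻¹ * lam i) = c := by
          apply hcu
          refine ⟨hbound, ?_⟩
          rw [← hrescale, h0, smul_zero]
        have h2 : (fun _ : Fin d => (0:K)) = c := by
          apply hcu
          exact ⟨fun i => by simp, by simp⟩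
        have h3 := congrFun (h1.trans h2.symm) i0
        rw [inv_mul_cancel₀ hli0] at h3
        exact one_ne_zero h3
      have hub : gaugeNorm K N (∑ i, lam i • e i) ≤ ⨆ i, ‖lam i‖ := by
        have hmem : (lam i0)⁻¹ • (∑ i, lam i • e i) ∈ N := by
          rw [hrescale]
          refine aux_sum_mem hN0 hNadd Finset.univ (fun i => ((lam i0)⁻¹ * lam i) • e i) ?_
          intro i _
          exact hNsmul _ (hbound i) _ (heN i)
        have h := hUB _ _ (inv_ne_zero hli0) hmem
        rwa [norm_inv, inv_inv, ← hMi0] at h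
      have hlb : (⨆ i, ‖lam i‖) ≤ gaugeNorm K N (∑ i, lam i • e i) := by
        apply hLB _ _ hxne
        intro mu hmu hmem
        by_contra hcon
        push_neg at hcon
        have hmup : (0:ℝ) < ‖mu‖ := norm_pos_iff.mpr hmu
        have hgt : 1 < ‖mu‖ * ⨆ i, ‖lam i‖ := by
          have h := mul_lt_mul_of_pos_left hcon hmup
          rwa [mul_inv_cancel₀ (ne_of_gt hmup)] at h
        have hkne : mu * lam i0 ≠ 0 := mul_ne_zero hmu hli0
        have hknorm : 1 < ‖mu * lam i0‖ := by
          rw [norm_mul, ← hMi0]; exact hgt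
        have hnunorm : ‖(mu * lam i0)⁻¹‖ < 1 := by
          rw [norm_inv]
          exact inv_lt_one_of_one_lt₀ hknorm
        obtain ⟨c, ⟨hc1, hc2⟩, _⟩ := huniq _ hmem
        have hz : ((mu * lam i0)⁻¹ * mu) • (∑ i, lam i • e i) ∈ N := by
          rw [← smul_smul]
          exact hNsmul _ (le_of_lt hnunorm) _ hmem
        obtain ⟨c', _, hcu'⟩ := huniq _ hz
        have e1 : (fun i => (mu * lam i0)⁻¹ * c i) = c' := by
          apply hcu'
          constructor
          · intro i
            rw [norm_mul]
            calc ‖(mu * lam i0)⁻¹‖ * ‖c i‖ ≤ 1 * 1 :=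
                  mul_le_mul (le_of_lt hnunorm) (hc1 i) (norm_nonneg _) zero_le_one
              _ = 1 := mul_one _
          · rw [← smul_smul, hc2, Finset.smul_sum]
            simp [smul_smul]
        have e2 : (fun i => (mu * lam i0)⁻¹ * mu * lam i) = c' := by
          apply hcu'
          constructor
          · intro i
            have : ‖(mu * lam i0)⁻¹ * mu * lam i‖ = ‖mu * lam i0‖⁻¹ * ‖mu‖ * ‖lam i‖ := by
              rw [norm_mul, norm_mul, norm_inv]
            rw [this, norm_mul, ← hMi0]
            rw [mul_inv]
            have hMne : (⨆ i, ‖lam i‖) ≠ 0 := ne_of_gt hMpos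
            calc ‖mu‖⁻¹ * (⨆ i, ‖lam i‖)⁻¹ * ‖mu‖ * ‖lam i‖
                = (‖mu‖⁻¹ * ‖mu‖) * ((⨆ i, ‖lam i‖)⁻¹ * ‖lam i‖) := by ring
              _ = (⨆ i, ‖lam i‖)⁻¹ * ‖lam i‖ := by
                  rw [inv_mul_cancel₀ (ne_of_gt hmup), one_mul]
              _ ≤ (⨆ i, ‖lam i‖)⁻¹ * ⨆ i, ‖lam i‖ :=
                  mul_le_mul_of_nonneg_left (hble i) (inv_nonneg.mpr hM0)
              _ = 1 := inv_mul_cancel₀ hMne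
          · rw [Finset.smul_sum]
            simp [smul_smul, mul_assoc]
        have h3 := congrFun (e1.trans e2.symm) i0
        have h4 : (mu * lam i0)⁻¹ * mu * lam i0 = 1 := by
          rw [mul_assoc, inv_mul_cancel₀ hkne]
        rw [h4] at h3
        have h5 : ‖(mu * lam i0)⁻¹ * c i0‖ < 1 := by
          rw [norm_mul]
          calc ‖(mu * lam i0)⁻¹‖ * ‖c i0‖ ≤ ‖(mu * lam i0)⁻¹‖ * 1 :=
                mul_le_mul_of_nonneg_left (hc1 i0) (norm_nonneg _)
            _ = ‖(mu * lam i0)⁻¹‖ := mul_one _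
            _ < 1 := hnunorm
        rw [h3, norm_one] at h5
        exact lt_irrefl _ h5
      exact le_antisymm hub hlb
  exact ⟨⟨hgnn, hsmul, htri, hdef⟩, part2, hple⟩

end
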